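/- Let R be a commutative Noetherian ring which is a unique factorization domain, and let 0 → A → B → C → 0 be a short exact sequence of finitely generated R-modules. If Δ_0(C) is a unit of R, then for every i ≥ 0 the characteristic polynomial Δ_i(A) is associated (equal up to multiplication by a unit of R) to Δ_i(B). -/

import Mathlib

open Matrix LinearMap

/-- The ideal of `R` generated by the `k × k` minors of the matrix `M`.
(If `k = 0` this is all of `R`; if `k` exceeds the number of columns it is `0`.) -/
def minorsIdeal {R : Type*} [CommRing R] {n m : ℕ} (M : Matrix (Fin n) (Fin m) R)
    (k : ℕ) : Ideal R :=
  Ideal.span { x | ∃ (r : Fin k → Fin n) (c : Fin k → Fin m), x = (M.submatrix r c).det }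

/-- The `i`-th elementary (Fitting) ideal of a module presented by the `n × m` matrix `M`:
the ideal generated by the `(n - i) × (n - i)` minors of `M`. -/
def elemIdeal {R : Type*} [CommRing R] {n m : ℕ} (M : Matrix (Fin n) (Fin m) R)
    (i : ℕ) : Ideal R :=
  minorsIdeal M (n - i)

/-- `d` is a greatest common divisor of the elements of the ideal `I`. -/
def IsGCDOfIdeal {R : Type*} [CommRing R] (d : R) (I : Ideal R) : Prop :=
  (∀ x ∈ I, d ∣ x) ∧ ∀ e : R, (∀ x ∈ I, e ∣ x) → e ∣ d



section Minors
variable {R : Type*} [CommRing R]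

/-- generalized minors ideal over arbitrary index types -/
def minors {n m : Type*} (M : Matrix n m R) (k : ℕ) : Ideal R :=
  Ideal.span { x | ∃ (r : Fin k → n) (c : Fin k → m), x = (M.submatrix r c).det }

variable {n m : Type*}

lemma det_mem_minors (M : Matrix n m R) (k : ℕ) (r : Fin k → n) (c : Fin k → m) :
    (M.submatrix r c).det ∈ minors M k :=
  Ideal.subset_span ⟨r, c, rfl⟩

lemma minors_zero (M : Matrix n m R) : minors M 0 = ⊤ := by
  rw [Ideal.eq_top_iff_one]
  have := det_mem_minors M 0 Fin.elim0 Fin.elim0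
  simpa [Matrix.det_fin_zero] using this

lemma minors_submatrix_le {n' m' : Type*} (M : Matrix n m R) (k : ℕ)
    (a : n' → n) (b : m' → m) : minors (M.submatrix a b) k ≤ minors M k := by
  rw [minors, Ideal.span_le]
  rintro x ⟨r, c, rfl⟩
  exact det_mem_minors M k (a ∘ r) (b ∘ c)

lemma minors_submatrix_equiv {n' m' : Type*} (M : Matrix n m R) (k : ℕ)
    (e : n' ≃ n) (f : m' ≃ m) : minors (M.submatrix e f) k = minors M k := by
  refine le_antisymm (minors_submatrix_le _ _ _ _) ?_
  have h := minors_submatrix_le (M.submatrix (e : n' → n) (f : m' → m)) k e.symm f.symm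
  simpa [Matrix.submatrix_submatrix, Equiv.self_comp_symm, Matrix.submatrix_id_id] using h

lemma minors_transpose_le (M : Matrix n m R) (k : ℕ) : minors Mᵀ k ≤ minors M k := by
  rw [minors, Ideal.span_le]
  rintro x ⟨r, c, rfl⟩
  have : (Mᵀ.submatrix r c) = (M.submatrix c r)ᵀ := rfl
  rw [this, Matrix.det_transpose]
  exact det_mem_minors M k c r

lemma minors_transpose (M : Matrix n m R) (k : ℕ) : minors Mᵀ k = minors M k := by
  refine le_antisymm (minors_transpose_le M k) ?_
  have := minors_transpose_le Mᵀ k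
  simpa using this

lemma minors_succ_le (M : Matrix n m R) (k : ℕ) : minors M (k + 1) ≤ minors M k := by
  rw [minors, Ideal.span_le]
  rintro x ⟨r, c, rfl⟩
  rw [Matrix.det_succ_row_zero]
  refine Ideal.sum_mem _ fun j _ => ?_
  rw [Matrix.submatrix_submatrix]
  exact Ideal.mul_mem_left _ _ (det_mem_minors M k _ _)

lemma minors_le_of_le (M : Matrix n m R) {k k' : ℕ} (h : k ≤ k') :
    minors M k' ≤ minors M k := by
  induction k' with
  | zero => simp_all
  | succ k'' ih =>
    rcases Nat.lt_or_ge k (k'' + 1) with h' | h'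
    · exact le_trans (minors_succ_le M k'') (ih (by omega))
    · have : k = k'' + 1 := by omega
      subst this; exact le_rfl

/-- determinant of a product expanded by multilinearity in rows -/
lemma det_mul_expand {l : Type*} [Fintype l] {k : ℕ}
    (A : Matrix (Fin k) l R) (B : Matrix l (Fin k) R) :
    (A * B).det = ∑ f : Fin k → l, (∏ i, A i (f i)) • (B.submatrix f _root_.id).det := by
  have h1 : (A * B).det = Matrix.detRowAlternating (fun i => ∑ x : l, A i x • B x) := by
    congr 1
    funext i j
    simp [Matrix.mul_apply, Finset.sum_apply]
  rw [h1, ← AlternatingMap.coe_multilinearMap]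
  rw [(Matrix.detRowAlternating (R := R) (n := Fin k)).toMultilinearMap.map_sum
    (g := fun i x => A i x • B x)]
  congr 1
  funext f
  rw [(Matrix.detRowAlternating (R := R) (n := Fin k)).toMultilinearMap.map_smul_univ
    (fun i => A i (f i)) (fun i => B (f i))]
  rfl

lemma minors_mul_le_right {l : Type*} [Fintype l] (P : Matrix n l R) (Q : Matrix l m R)
    (k : ℕ) : minors (P * Q) k ≤ minors Q k := by
  rw [minors, Ideal.span_le]
  rintro x ⟨r, c, rfl⟩
  have hsub : (P * Q).submatrix r c = (P.submatrix r _root_.id) * (Q.submatrix _root_.id c) := by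
    ext i j; simp [Matrix.mul_apply]
  rw [hsub, det_mul_expand]
  refine Ideal.sum_mem _ fun f _ => ?_
  rw [smul_eq_mul]
  refine Ideal.mul_mem_left _ _ ?_
  have : (Q.submatrix _root_.id c).submatrix f _root_.id = Q.submatrix f c := rfl
  rw [this]
  exact det_mem_minors Q k f c

lemma minors_mul_le_left {l : Type*} [Fintype l] (P : Matrix n l R) (Q : Matrix l m R)
    (k : ℕ) : minors (P * Q) k ≤ minors P k := by
  rw [← minors_transpose (P * Q), Matrix.transpose_mul, ← minors_transpose P]
  exact minors_mul_le_right Qᵀ Pᵀ k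

end Minors

section Stab
variable {R : Type*} [CommRing R] {n m : Type*}

lemma minors_det_zero_of_dup {n' m' : Type*} (M : Matrix n' m' R) {k : ℕ}
    {rr : Fin k → n'} {cc : Fin k → m'}
    (h : ¬ Function.Injective rr ∨ ¬ Function.Injective cc) :
    (M.submatrix rr cc).det = 0 := by
  rcases h with h | h
  · obtain ⟨a, b, hab, hne⟩ := Function.not_injective_iff.mp h
    refine Matrix.det_zero_of_row_eq hne ?_
    funext j
    simp [Matrix.submatrix_apply, hab]
  · obtain ⟨a, b, hab, hne⟩ := Function.not_injective_iff.mp h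
    refine Matrix.det_zero_of_column_eq hne ?_
    intro j
    simp [Matrix.submatrix_apply, hab]

lemma minors_stab (M : Matrix n m R) (w : Matrix n (Fin 1) R) (k : ℕ) :
    minors (Matrix.fromBlocks M w 0 (1 : Matrix (Fin 1) (Fin 1) R)) k = minors M (k - 1) := by
  set N := Matrix.fromBlocks M w 0 (1 : Matrix (Fin 1) (Fin 1) R) with hN
  rcases k with _ | k'
  · rw [minors_zero, minors_zero]
  have hk : k' + 1 - 1 = k' := rfl
  rw [hk]
  apply le_antisymm
  · -- every (k'+1)-minor of N is in minors M k'
    rw [minors, Ideal.span_le]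
    rintro x ⟨rr, cc, rfl⟩
    by_cases hr : Function.Injective rr
    swap
    · rw [minors_det_zero_of_dup N (Or.inl hr)]; exact Ideal.zero_mem _
    by_cases hc : Function.Injective cc
    swap
    · rw [minors_det_zero_of_dup N (Or.inr hc)]; exact Ideal.zero_mem _
    set S := N.submatrix rr cc with hS
    by_cases hi0 : ∃ i0, rr i0 = Sum.inr 0
    · obtain ⟨i0, hi0eq⟩ := hi0
      by_cases hj0 : ∃ j0, cc j0 = Sum.inr 0
      · obtain ⟨j0, hj0eq⟩ := hj0
        have hrow : ∀ j, S i0 j = if j = j0 then 1 else 0 := by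
          intro j
          rcases hccj : cc j with y | u
          · have hne : j ≠ j0 := by
              rintro rfl; rw [hccj] at hj0eq; exact Sum.inl_ne_inr hj0eq
            simp [hS, Matrix.submatrix_apply, hi0eq, hccj, hN, hne]
          · have : u = 0 := Subsingleton.elim _ _
            subst this
            have : j = j0 := hc (by rw [hccj, hj0eq])
            subst this
            simp [hS, Matrix.submatrix_apply, hi0eq, hccj, hN]
        rw [hS, Matrix.det_succ_row _ i0]
        rw [Finset.sum_eq_single j0 ?h1 ?h2]
        case h1 =>
          intro j _ hne
          rw [← hS]
          rw [hrow j, if_neg hne]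
          ring
        case h2 => intro h; exact absurd (Finset.mem_univ j0) h
        rw [← hS, hrow j0, if_pos rfl, mul_one]
        refine Ideal.mul_mem_left _ _ ?_
        have hch : ∀ i : Fin k', ∃ x, rr (i0.succAbove i) = Sum.inl x := by
          intro i
          rcases hx : rr (i0.succAbove i) with y | u
          · exact ⟨y, rfl⟩
          · have : u = 0 := Subsingleton.elim _ _
            subst this
            exact absurd (hr (hx.trans hi0eq.symm)) (Fin.succAbove_ne i0 i)
        have hcc : ∀ j : Fin k', ∃ y, cc (j0.succAbove j) = Sum.inl y := by
          intro j
          rcases hx : cc (j0.succAbove j) with y | u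
          · exact ⟨y, rfl⟩
          · have : u = 0 := Subsingleton.elim _ _
            subst this
            exact absurd (hc (hx.trans hj0eq.symm)) (Fin.succAbove_ne j0 j)
        choose r' hr' using hch
        choose c' hc' using hcc
        have : S.submatrix i0.succAbove j0.succAbove = M.submatrix r' c' := by
          ext i j
          simp only [hS, Matrix.submatrix_apply, hr' i, hc' j, hN,
            Matrix.fromBlocks_apply₁₁]
        rw [hS] at this ⊢
        rw [this]
        exact det_mem_minors M k' r' c'
      · -- row i0 is identically zero
        push_neg at hj0
        have : S.det = 0 := by
          refine Matrix.det_eq_zero_of_row_eq_zero i0 ?_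
          intro j
          rcases hccj : cc j with y | u
          · simp [hS, Matrix.submatrix_apply, hi0eq, hccj, hN]
          · have : u = 0 := Subsingleton.elim _ _
            subst this
            exact absurd hccj (hj0 j)
        rw [hS] at this
        rw [this]; exact Ideal.zero_mem _
    · push_neg at hi0
      have hch : ∀ i, ∃ x, rr i = Sum.inl x := by
        intro i
        rcases hx : rr i with y | u
        · exact ⟨y, rfl⟩
        · have : u = 0 := Subsingleton.elim _ _
          subst this
          exact absurd hx (hi0 i)
      choose r' hr' using hch
      by_cases hj0 : ∃ j0, cc j0 = Sum.inr 0
      · obtain ⟨j0, hj0eq⟩ := hj0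
        rw [hS, Matrix.det_succ_column _ j0]
        refine Ideal.sum_mem _ fun i _ => ?_
        refine Ideal.mul_mem_left _ _ ?_
        have hcc : ∀ j : Fin k', ∃ y, cc (j0.succAbove j) = Sum.inl y := by
          intro j
          rcases hx : cc (j0.succAbove j) with y | u
          · exact ⟨y, rfl⟩
          · have : u = 0 := Subsingleton.elim _ _
            subst this
            exact absurd (hc (hx.trans hj0eq.symm)) (Fin.succAbove_ne j0 j)
        choose c' hc' using hcc
        have : (N.submatrix rr cc).submatrix i.succAbove j0.succAbove
            = M.submatrix (r' ∘ i.succAbove) c' := by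
          ext a b
          simp only [Matrix.submatrix_apply, Function.comp_apply, hr' _, hc' b, hN,
            Matrix.fromBlocks_apply₁₁]
        rw [this]
        exact det_mem_minors M k' _ _
      · push_neg at hj0
        have hcc : ∀ j, ∃ y, cc j = Sum.inl y := by
          intro j
          rcases hx : cc j with y | u
          · exact ⟨y, rfl⟩
          · have : u = 0 := Subsingleton.elim _ _
            subst this
            exact absurd hx (hj0 j)
        choose c' hc' using hcc
        have : N.submatrix rr cc = M.submatrix r' c' := by
          ext a b
          simp only [Matrix.submatrix_apply, hr' a, hc' b, hN, Matrix.fromBlocks_apply₁₁]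
        rw [hS, this]
        exact minors_succ_le M k' (det_mem_minors M (k' + 1) r' c')
  · -- minors M k' ≤ minors N (k'+1)
    conv_lhs => rw [minors]
    rw [Ideal.span_le]
    rintro x ⟨r, c, rfl⟩
    have e : Fin (k' + 1) ≃ Fin k' ⊕ Fin 1 := finCongr (by omega) |>.trans finSumFinEquiv.symm
    set A : Fin k' ⊕ Fin 1 → n ⊕ Fin 1 := Sum.elim (Sum.inl ∘ r) Sum.inr with hA
    set Bc : Fin k' ⊕ Fin 1 → m ⊕ Fin 1 := Sum.elim (Sum.inl ∘ c) Sum.inr with hB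
    have key : (N.submatrix A Bc).det = (M.submatrix r c).det := by
      have : N.submatrix A Bc
          = Matrix.fromBlocks (M.submatrix r c) (w.submatrix r _root_.id) 0 1 := by
        ext a b
        rcases a with a | a <;> rcases b with b | b <;>
          simp [hA, hB, hN, Matrix.submatrix_apply]
      rw [this, Matrix.det_fromBlocks_zero₂₁, Matrix.det_one, mul_one]
    have : (M.submatrix r c).det = (N.submatrix (A ∘ e) (Bc ∘ e)).det := by
      rw [← Matrix.submatrix_submatrix, Matrix.det_submatrix_equiv_self e, key]
    rw [this]
    exact det_mem_minors N (k' + 1) _ _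

end Stab

section L2
variable {R : Type*} [CommRing R] {n m : Type*}

lemma minors_one_block_fin (M : Matrix n m R) :
    ∀ (r : ℕ) (W : Matrix n (Fin r) R) (k : ℕ),
    minors (Matrix.fromBlocks M W 0 (1 : Matrix (Fin r) (Fin r) R)) k = minors M (k - r) := by
  intro r
  induction r with
  | zero =>
    intro W k
    set e : n ⊕ Fin 0 ≃ n := Equiv.sumEmpty n (Fin 0) with he
    set f : m ⊕ Fin 0 ≃ m := Equiv.sumEmpty m (Fin 0) with hf
    have hes : ∀ a : n, e.symm a = Sum.inl a := fun a =>
      e.injective (by rw [Equiv.apply_symm_apply]; simp [he])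
    have hfs : ∀ b : m, f.symm b = Sum.inl b := fun b =>
      f.injective (by rw [Equiv.apply_symm_apply]; simp [hf])
    have hsub : (Matrix.fromBlocks M W 0 (1 : Matrix (Fin 0) (Fin 0) R)).submatrix
        e.symm f.symm = M := by
      ext a b
      rw [Matrix.submatrix_apply, hes, hfs, Matrix.fromBlocks_apply₁₁]
    have := minors_submatrix_equiv (Matrix.fromBlocks M W 0 (1 : Matrix (Fin 0) (Fin 0) R))
      k e.symm f.symm
    rw [hsub] at this
    rw [← this]
    norm_num
  | succ r ih =>
    intro W k
    set fse := (finSumFinEquiv : Fin r ⊕ Fin 1 ≃ Fin (r + 1)) with hfse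
    set N := Matrix.fromBlocks M W 0 (1 : Matrix (Fin (r+1)) (Fin (r+1)) R) with hNdef
    set ρ : (n ⊕ Fin r) ⊕ Fin 1 ≃ n ⊕ Fin (r+1) :=
      (Equiv.sumAssoc n (Fin r) (Fin 1)).trans ((Equiv.refl n).sumCongr fse) with hρ
    set σ : (m ⊕ Fin r) ⊕ Fin 1 ≃ m ⊕ Fin (r+1) :=
      (Equiv.sumAssoc m (Fin r) (Fin 1)).trans ((Equiv.refl m).sumCongr fse) with hσ
    set M'' := Matrix.fromBlocks M
      (W.submatrix _root_.id (fun j : Fin r => fse (Sum.inl j))) 0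
      (1 : Matrix (Fin r) (Fin r) R) with hM''
    set v : Matrix (n ⊕ Fin r) (Fin 1) R :=
      Matrix.of (fun x _ => Sum.elim (fun i => W i (fse (Sum.inr 0))) (fun _ => (0:R)) x)
      with hv
    have claim : N.submatrix ρ σ = Matrix.fromBlocks M'' v 0 (1 : Matrix (Fin 1) (Fin 1) R) := by
      ext a b
      rcases a with (a | a) | a <;> rcases b with (b | b) | b <;>
        simp [hρ, hσ, hNdef, hM'', hv, Matrix.submatrix_apply, Matrix.one_apply,
          Fin.fin_one_eq_zero, Subsingleton.elim (α := Fin 1)]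
    have h1 : minors N k = minors (Matrix.fromBlocks M'' v 0 (1 : Matrix (Fin 1) (Fin 1) R)) k := by
      rw [← claim, minors_submatrix_equiv]
    rw [h1, minors_stab M'' v, ih, Nat.sub_sub, Nat.add_comm]

lemma minors_one_block {n' : Type*} [Fintype n'] [DecidableEq n'] (M : Matrix n m R)
    (W : Matrix n n' R) (k : ℕ) :
    minors (Matrix.fromBlocks M W 0 (1 : Matrix n' n' R)) k
      = minors M (k - Fintype.card n') := by
  set e := (Fintype.equivFin n').symm with he
  have hsub : (Matrix.fromBlocks M W 0 (1 : Matrix n' n' R)).submatrix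
      ((Equiv.refl n).sumCongr e) ((Equiv.refl m).sumCongr e)
      = Matrix.fromBlocks M (W.submatrix _root_.id e) 0
        (1 : Matrix (Fin (Fintype.card n')) (Fin (Fintype.card n')) R) := by
    ext a b
    rcases a with a | a <;> rcases b with b | b <;>
      simp [Matrix.submatrix_apply, Matrix.one_apply]
  have := minors_submatrix_equiv (Matrix.fromBlocks M W 0 (1 : Matrix n' n' R)) k
    ((Equiv.refl n).sumCongr e) ((Equiv.refl m).sumCongr e)
  rw [hsub] at this
  rw [← this, minors_one_block_fin]

lemma minors_one_block' {n' : Type*} [Fintype n'] [DecidableEq n'] (M : Matrix n m R)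
    (W : Matrix n n' R) (k : ℕ) :
    minors (Matrix.fromBlocks (1 : Matrix n' n' R) 0 W M) k
      = minors M (k - Fintype.card n') := by
  have hsub : (Matrix.fromBlocks (1 : Matrix n' n' R) 0 W M).submatrix
      (Equiv.sumComm n n') (Equiv.sumComm m n')
      = Matrix.fromBlocks M W 0 (1 : Matrix n' n' R) := by
    ext a b
    rcases a with a | a <;> rcases b with b | b <;>
      simp [Matrix.submatrix_apply]
  have := minors_submatrix_equiv (Matrix.fromBlocks (1 : Matrix n' n' R) 0 W M) k
    (Equiv.sumComm n n') (Equiv.sumComm m n')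
  rw [hsub] at this
  rw [← this, minors_one_block]

end L2

section Pres
variable {R : Type*} [CommRing R]

lemma minors_eq_of_range_le {n m₁ m₂ : Type*} [Fintype m₁] [Fintype m₂]
    (M₁ : Matrix n m₁ R) (M₂ : Matrix n m₂ R)
    (h : LinearMap.range M₁.mulVecLin ≤ LinearMap.range M₂.mulVecLin) (k : ℕ) :
    minors M₁ k ≤ minors M₂ k := by
  classical
  have hcol : ∀ j, ∃ x, M₂.mulVec x = fun i => M₁ i j := by
    intro j
    have hmem : (fun i => M₁ i j) ∈ LinearMap.range M₁.mulVecLin := by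
      refine ⟨Pi.single j 1, ?_⟩
      rw [Matrix.mulVecLin_apply, Matrix.mulVec_single]
      simp
      rfl
    exact h hmem
  choose X hX using hcol
  have hfac : M₂ * (Matrix.of fun a j => X j a) = M₁ := by
    ext i j
    have := congrFun (hX j) i
    simpa [Matrix.mul_apply, Matrix.mulVec, dotProduct] using this
  rw [← hfac]
  exact minors_mul_le_left _ _ k

lemma minors_eq_of_range_eq {n m₁ m₂ : Type*} [Fintype m₁] [Fintype m₂]
    (M₁ : Matrix n m₁ R) (M₂ : Matrix n m₂ R)
    (h : LinearMap.range M₁.mulVecLin = LinearMap.range M₂.mulVecLin) (k : ℕ) :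
    minors M₁ k = minors M₂ k :=
  le_antisymm (minors_eq_of_range_le M₁ M₂ h.le k) (minors_eq_of_range_le M₂ M₁ h.ge k)

/-- Invariance of the elementary ideals under change of finite presentation. -/
lemma minors_pres_eq {N' : Type*} [AddCommGroup N'] [Module R N']
    {n₁ m₁ n₂ m₂ : Type*} [Fintype n₁] [Fintype m₁] [Fintype n₂] [Fintype m₂]
    [DecidableEq n₁] [DecidableEq n₂]
    (M₁ : Matrix n₁ m₁ R) (p₁ : (n₁ → R) →ₗ[R] N') (hp₁ : Function.Surjective p₁)
    (hker₁ : LinearMap.ker p₁ = LinearMap.range M₁.mulVecLin)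
    (M₂ : Matrix n₂ m₂ R) (p₂ : (n₂ → R) →ₗ[R] N') (hp₂ : Function.Surjective p₂)
    (hker₂ : LinearMap.ker p₂ = LinearMap.range M₂.mulVecLin)
    (i : ℕ) :
    minors M₁ (Fintype.card n₁ - i) = minors M₂ (Fintype.card n₂ - i) := by
  classical
  set q : (n₁ ⊕ n₂ → R) →ₗ[R] N' :=
    p₁.comp (LinearMap.funLeft R R Sum.inl) + p₂.comp (LinearMap.funLeft R R Sum.inr) with hq
  have hqapp : ∀ x : n₁ ⊕ n₂ → R, q x = p₁ (x ∘ Sum.inl) + p₂ (x ∘ Sum.inr) := fun x => rfl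
  -- choose the comparison matrices V and W
  have hv : ∀ j : n₂, ∃ v : n₁ → R, p₁ v = p₂ (Pi.single j 1) := fun j => hp₁ _
  choose v hv using hv
  set V : Matrix n₁ n₂ R := Matrix.of fun i j => v j i with hV
  have hVp : ∀ y : n₂ → R, p₁ (V.mulVec y) = p₂ y := by
    intro y
    have : p₁.comp V.mulVecLin = p₂ := by
      refine Module.Basis.ext (Pi.basisFun R n₂) ?_
      intro j
      rw [Pi.basisFun_apply]
      simp only [LinearMap.comp_apply, Matrix.mulVecLin_apply, Matrix.mulVec_single]
      have : MulOpposite.op (1:R) • V.col j = v j := by funext i; simp [hV, Matrix.col]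
      rw [this, hv j]
    exact LinearMap.congr_fun this y
  have hw : ∀ j : n₁, ∃ w : n₂ → R, p₂ w = p₁ (Pi.single j 1) := fun j => hp₂ _
  choose w hw using hw
  set W : Matrix n₂ n₁ R := Matrix.of fun i j => w j i with hW
  have hWp : ∀ y : n₁ → R, p₂ (W.mulVec y) = p₁ y := by
    intro y
    have : p₂.comp W.mulVecLin = p₁ := by
      refine Module.Basis.ext (Pi.basisFun R n₁) ?_
      intro j
      rw [Pi.basisFun_apply]
      simp only [LinearMap.comp_apply, Matrix.mulVecLin_apply, Matrix.mulVec_single]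
      have : MulOpposite.op (1:R) • W.col j = w j := by funext i; simp [hW, Matrix.col]
      rw [this, hw j]
    exact LinearMap.congr_fun this y
  -- member of kernels
  have hker₁' : ∀ z, p₁ (M₁.mulVec z) = 0 := by
    intro z
    have : M₁.mulVec z ∈ LinearMap.ker p₁ := by
      rw [hker₁]; exact ⟨z, rfl⟩
    exact LinearMap.mem_ker.mp this
  have hker₂' : ∀ z, p₂ (M₂.mulVec z) = 0 := by
    intro z
    have : M₂.mulVec z ∈ LinearMap.ker p₂ := by
      rw [hker₂]; exact ⟨z, rfl⟩
    exact LinearMap.mem_ker.mp this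
  set K₁ : Matrix (n₁ ⊕ n₂) (m₁ ⊕ n₂) R := Matrix.fromBlocks M₁ (-V) 0 1 with hK₁
  set K₂ : Matrix (n₁ ⊕ n₂) (n₁ ⊕ m₂) R := Matrix.fromBlocks 1 0 (-W) M₂ with hK₂
  have hqk₁ : LinearMap.ker q = LinearMap.range K₁.mulVecLin := by
    ext x
    simp only [LinearMap.mem_ker, LinearMap.mem_range, Matrix.mulVecLin_apply]
    constructor
    · intro hx
      rw [hqapp] at hx
      have hu : (x ∘ Sum.inl + V.mulVec (x ∘ Sum.inr)) ∈ LinearMap.ker p₁ := by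
        rw [LinearMap.mem_ker, map_add, hVp, hx]
      rw [hker₁] at hu
      obtain ⟨z, hz⟩ := hu
      rw [Matrix.mulVecLin_apply] at hz
      refine ⟨Sum.elim z (x ∘ Sum.inr), ?_⟩
      rw [hK₁, Matrix.fromBlocks_mulVec]
      funext a
      rcases a with a | a
      · simp only [Sum.elim_inl, Sum.elim_comp_inl, Sum.elim_comp_inr, Pi.add_apply,
          Matrix.neg_mulVec, Pi.neg_apply]
        have := congrFun hz a
        simp only [Pi.add_apply, Function.comp_apply] at this
        linear_combination this
      · simp [Sum.elim_comp_inl, Sum.elim_comp_inr, Matrix.one_mulVec, Matrix.zero_mulVec]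
    · rintro ⟨u, rfl⟩
      rw [hqapp, hK₁, Matrix.fromBlocks_mulVec]
      simp only [Sum.elim_comp_inl, Sum.elim_comp_inr, Matrix.zero_mulVec, Matrix.one_mulVec,
        zero_add, map_add, Matrix.neg_mulVec]
      rw [map_neg, hVp, hker₁']
      abel
  have hqk₂ : LinearMap.ker q = LinearMap.range K₂.mulVecLin := by
    ext x
    simp only [LinearMap.mem_ker, LinearMap.mem_range, Matrix.mulVecLin_apply]
    constructor
    · intro hx
      rw [hqapp] at hx
      have hu : (x ∘ Sum.inr + W.mulVec (x ∘ Sum.inl)) ∈ LinearMap.ker p₂ := by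
        rw [LinearMap.mem_ker, map_add, hWp]
        linear_combination (norm := abel_nf) hx
      rw [hker₂] at hu
      obtain ⟨z, hz⟩ := hu
      rw [Matrix.mulVecLin_apply] at hz
      refine ⟨Sum.elim (x ∘ Sum.inl) z, ?_⟩
      rw [hK₂, Matrix.fromBlocks_mulVec]
      funext a
      rcases a with a | a
      · simp [Sum.elim_comp_inl, Sum.elim_comp_inr, Matrix.one_mulVec, Matrix.zero_mulVec]
      · simp only [Sum.elim_inr, Sum.elim_comp_inl, Sum.elim_comp_inr, Pi.add_apply,
          Matrix.neg_mulVec, Pi.neg_apply]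
        have := congrFun hz a
        simp only [Pi.add_apply, Function.comp_apply] at this
        linear_combination this
    · rintro ⟨u, rfl⟩
      rw [hqapp, hK₂, Matrix.fromBlocks_mulVec]
      simp only [Sum.elim_comp_inl, Sum.elim_comp_inr, Matrix.zero_mulVec, Matrix.one_mulVec,
        add_zero, map_add, Matrix.neg_mulVec]
      rw [map_neg, hWp, hker₂']
      abel
  have hKeq : ∀ k, minors K₁ k = minors K₂ k := by
    intro k
    exact minors_eq_of_range_eq K₁ K₂ (by rw [← hqk₁, ← hqk₂]) k
  set t := Fintype.card n₁ + Fintype.card n₂ - i with ht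
  have h₁ : minors K₁ t = minors M₁ (Fintype.card n₁ - i) := by
    rw [hK₁, minors_one_block]
    congr 1
    omega
  have h₂ : minors K₂ t = minors M₂ (Fintype.card n₂ - i) := by
    rw [hK₂, minors_one_block']
    congr 1
    omega
  rw [← h₁, ← h₂, hKeq]

end Pres

section Block
variable {R : Type*} [CommRing R]

lemma exists_block_pres {A B C : Type*} [AddCommGroup A] [Module R A]
    [AddCommGroup B] [Module R B] [AddCommGroup C] [Module R C]
    (f : A →ₗ[R] B) (g : B →ₗ[R] C) (hf : Function.Injective f)
    (hg : Function.Surjective g)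
    (hexact : LinearMap.ker g = LinearMap.range f)
    {αA γA αC γC : Type*} [Fintype αA] [Fintype γA] [Fintype αC] [Fintype γC]
    [DecidableEq αA] [DecidableEq αC] [DecidableEq γC]
    (MA : Matrix αA γA R) (pA : (αA → R) →ₗ[R] A) (hpA : Function.Surjective pA)
    (hkerA : LinearMap.ker pA = LinearMap.range MA.mulVecLin)
    (MC : Matrix αC γC R) (pC : (αC → R) →ₗ[R] C) (hpC : Function.Surjective pC)
    (hkerC : LinearMap.ker pC = LinearMap.range MC.mulVecLin) :
    ∃ (Y : Matrix αA γC R) (p : (αA ⊕ αC → R) →ₗ[R] B),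
      Function.Surjective p ∧
      LinearMap.ker p = LinearMap.range (Matrix.fromBlocks MA Y 0 MC).mulVecLin ∧
      (∀ z : αA → R, Sum.elim z 0 ∈ LinearMap.ker p →
        z ∈ LinearMap.range MA.mulVecLin) := by
  classical
  -- lifts of the generators of C
  have hb : ∀ j : αC, ∃ bj : B, g bj = pC (Pi.single j 1) := fun j => hg _
  choose b hb using hb
  set ℓ : (αC → R) →ₗ[R] B :=
    { toFun := fun y => ∑ j, y j • b j
      map_add' := by intro y z; simp [add_smul, Finset.sum_add_distrib]
      map_smul' := by intro r y; simp [Finset.smul_sum, smul_smul] } with hℓ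
  have hℓsingle : ∀ j, ℓ (Pi.single j 1) = b j := by
    intro j
    simp only [hℓ, LinearMap.coe_mk, AddHom.coe_mk, Pi.single_apply]
    simp [ite_smul]
  have hgℓ : ∀ y, g (ℓ y) = pC y := by
    intro y
    have : g.comp ℓ = pC := by
      refine Module.Basis.ext (Pi.basisFun R αC) ?_
      intro j
      rw [Pi.basisFun_apply, LinearMap.comp_apply, hℓsingle, hb]
    exact LinearMap.congr_fun this y
  have hkerA' : ∀ z, pA (MA.mulVec z) = 0 := by
    intro z
    have : MA.mulVec z ∈ LinearMap.ker pA := by rw [hkerA]; exact ⟨z, rfl⟩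
    exact LinearMap.mem_ker.mp this
  have hkerC' : ∀ z, pC (MC.mulVec z) = 0 := by
    intro z
    have : MC.mulVec z ∈ LinearMap.ker pC := by rw [hkerC]; exact ⟨z, rfl⟩
    exact LinearMap.mem_ker.mp this
  have hgf : ∀ a : A, g (f a) = 0 := by
    intro a
    have : f a ∈ LinearMap.ker g := by rw [hexact]; exact ⟨a, rfl⟩
    exact LinearMap.mem_ker.mp this
  -- choose the correcting block Y
  have hx : ∀ j : γC, ∃ xj : αA → R, f (pA xj) = ℓ (MC.mulVec (Pi.single j 1)) := by
    intro j
    have h0 : g (ℓ (MC.mulVec (Pi.single j 1))) = 0 := by rw [hgℓ, hkerC']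
    have : ℓ (MC.mulVec (Pi.single j 1)) ∈ LinearMap.range f := by
      rw [← hexact]; exact LinearMap.mem_ker.mpr h0
    obtain ⟨a, ha⟩ := this
    obtain ⟨xj, hxj⟩ := hpA a
    exact ⟨xj, by rw [hxj, ha]⟩
  choose xv hxv using hx
  set Y : Matrix αA γC R := Matrix.of fun i j => -(xv j i) with hY
  have hYrel : ∀ y : γC → R, f (pA (Y.mulVec y)) + ℓ (MC.mulVec y) = 0 := by
    intro y
    have : (f.comp (pA.comp Y.mulVecLin)) + ℓ.comp MC.mulVecLin = 0 := by
      refine Module.Basis.ext (Pi.basisFun R γC) ?_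
      intro j
      rw [Pi.basisFun_apply]
      simp only [LinearMap.add_apply, LinearMap.comp_apply, Matrix.mulVecLin_apply,
        LinearMap.zero_apply]
      have h1 : Y.mulVec (Pi.single j 1) = fun i => -(xv j i) := by
        rw [Matrix.mulVec_single]
        funext i
        simp [hY]
      rw [h1]
      have h2 : (fun i => -(xv j i)) = -(xv j) := by funext i; simp
      rw [h2, map_neg, map_neg, hxv]
      abel
    have := LinearMap.congr_fun this y
    simpa using this
  set p : (αA ⊕ αC → R) →ₗ[R] B :=
    f.comp (pA.comp (LinearMap.funLeft R R Sum.inl)) + ℓ.comp (LinearMap.funLeft R R Sum.inr)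
    with hp
  have happ : ∀ x : αA ⊕ αC → R, p x = f (pA (x ∘ Sum.inl)) + ℓ (x ∘ Sum.inr) := fun _ => rfl
  refine ⟨Y, p, ?_, ?_, ?_⟩
  · -- surjective
    intro bb
    obtain ⟨y, hy⟩ := hpC (g bb)
    have h0 : g (bb - ℓ y) = 0 := by rw [map_sub, hgℓ, hy, sub_self]
    have : bb - ℓ y ∈ LinearMap.range f := by rw [← hexact]; exact LinearMap.mem_ker.mpr h0
    obtain ⟨a, ha⟩ := this
    obtain ⟨x, hxa⟩ := hpA a
    refine ⟨Sum.elim x y, ?_⟩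
    rw [happ]
    simp only [Sum.elim_comp_inl, Sum.elim_comp_inr]
    rw [hxa, ha]
    abel
  · -- kernel
    ext x
    simp only [LinearMap.mem_ker, LinearMap.mem_range, Matrix.mulVecLin_apply]
    constructor
    · intro hxk
      rw [happ] at hxk
      have h0 : pC (x ∘ Sum.inr) = 0 := by
        have := congrArg g hxk
        rw [map_add, map_zero, hgf, hgℓ, zero_add] at this
        exact this
      have : x ∘ Sum.inr ∈ LinearMap.ker pC := LinearMap.mem_ker.mpr h0
      rw [hkerC] at this
      obtain ⟨z, hz⟩ := this
      rw [Matrix.mulVecLin_apply] at hz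
      have h1 : f (pA (x ∘ Sum.inl)) = f (pA (Y.mulVec z)) := by
        have h2 := hYrel z
        rw [hz] at h2
        have h4 : ℓ (x ∘ Sum.inr) = -f (pA (Y.mulVec z)) := eq_neg_of_add_eq_zero_right h2
        rw [h4] at hxk
        exact eq_of_sub_eq_zero (by rw [sub_eq_add_neg]; exact hxk)
      have h3 : pA (x ∘ Sum.inl - Y.mulVec z) = 0 := by
        rw [map_sub, hf h1, sub_self]
      have : x ∘ Sum.inl - Y.mulVec z ∈ LinearMap.ker pA := LinearMap.mem_ker.mpr h3
      rw [hkerA] at this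
      obtain ⟨u, hu⟩ := this
      rw [Matrix.mulVecLin_apply] at hu
      refine ⟨Sum.elim u z, ?_⟩
      rw [Matrix.fromBlocks_mulVec]
      funext a
      rcases a with a | a
      · simp only [Sum.elim_inl, Sum.elim_comp_inl, Sum.elim_comp_inr, Pi.add_apply]
        have := congrFun hu a
        simp only [Pi.sub_apply, Function.comp_apply] at this
        linear_combination this
      · simp only [Sum.elim_inr, Sum.elim_comp_inl, Sum.elim_comp_inr, Pi.add_apply,
          Matrix.zero_mulVec, Pi.zero_apply, zero_add]
        exact congrFun hz a
    · rintro ⟨u, rfl⟩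
      rw [happ, Matrix.fromBlocks_mulVec]
      simp only [Sum.elim_comp_inl, Sum.elim_comp_inr, Matrix.zero_mulVec, zero_add]
      rw [map_add, map_add, hkerA', map_zero, zero_add]
      exact hYrel (u ∘ Sum.inr)
  · -- extra fact
    intro z hz
    rw [LinearMap.mem_ker, happ] at hz
    simp only [Sum.elim_comp_inl, Sum.elim_comp_inr, map_zero, add_zero] at hz
    have : pA z = 0 := by
      apply hf
      rw [hz, map_zero]
    rw [← hkerA]
    exact LinearMap.mem_ker.mpr this

end Block

section UFD
variable {R : Type*} [CommRing R]

lemma dvd_of_dvd_gens {S : Set R} {e : R} (h : ∀ y ∈ S, e ∣ y) :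
    ∀ x ∈ Ideal.span S, e ∣ x := by
  intro x hx
  refine Submodule.span_induction (p := fun x _ => e ∣ x) h (dvd_zero e)
    (fun a b _ _ ha hb => dvd_add ha hb) (fun r a _ ha => ?_) hx
  show e ∣ r * a
  exact ha.mul_left r

variable [IsDomain R] [UniqueFactorizationMonoid R]

lemma dvd_of_forall_dvd_mul (S : Set R) (hnz : ∃ y ∈ S, y ≠ 0)
    (hpr : ∀ q : R, Prime q → ¬ (∀ y ∈ S, q ∣ y)) (e x : R)
    (h : ∀ y ∈ S, e ∣ x * y) : e ∣ x := by
  revert x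
  refine UniqueFactorizationMonoid.induction_on_prime
    (P := fun e => ∀ x : R, (∀ y ∈ S, e ∣ x * y) → e ∣ x) e ?_ ?_ ?_
  · intro x h
    obtain ⟨y, hy, hy0⟩ := hnz
    have h0 := h y hy
    rw [zero_dvd_iff] at h0 ⊢
    rcases mul_eq_zero.mp h0 with h' | h'
    exacts [h', absurd h' hy0]
  · intro u hu x _
    exact hu.dvd
  · intro a p ha hp ih x h
    have hpx : p ∣ x := by
      by_contra hnpx
      refine hpr p hp ?_
      intro y hy
      have hdvd : p ∣ x * y := dvd_trans (dvd_mul_right p a) (h y hy)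
      rcases hp.2.2 x y hdvd with h' | h'
      · exact absurd h' hnpx
      · exact h'
    obtain ⟨x₂, rfl⟩ := hpx
    have ha2 : ∀ y ∈ S, a ∣ x₂ * y := by
      intro y hy
      have hd := h y hy
      rw [mul_assoc] at hd
      exact (mul_dvd_mul_iff_left hp.ne_zero).mp hd
    exact mul_dvd_mul_left p (ih x₂ ha2)

end UFD


lemma minorsIdeal_eq_minors {R : Type*} [CommRing R] {n m : ℕ}
    (M : Matrix (Fin n) (Fin m) R) (k : ℕ) : minorsIdeal M k = minors M k := rfl

/-- Over a Noetherian UFD `R`, if `0 → A → B → C → 0` is a short exact sequence of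
finitely generated `R`-modules and `Δ_0(C)` is a unit, then for every `i ≥ 0` one has
`Δ_i(A) = Δ_i(B)` up to multiplication by a unit of `R`. -/
theorem charPoly_eq_of_ses_of_isUnit
    {R : Type*} [CommRing R] [IsDomain R] [IsNoetherianRing R] [UniqueFactorizationMonoid R]
    {A B C : Type*} [AddCommGroup A] [Module R A] [Module.Finite R A]
    [AddCommGroup B] [Module R B] [Module.Finite R B]
    [AddCommGroup C] [Module R C] [Module.Finite R C]
    (f : A →ₗ[R] B) (g : B →ₗ[R] C)
    (hf : Function.Injective f) (hg : Function.Surjective g)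
    (hexact : LinearMap.ker g = LinearMap.range f)
    {na ma nb mb nc mc : ℕ}
    (MA : Matrix (Fin na) (Fin ma) R) (pA : (Fin na → R) →ₗ[R] A)
    (hpA : Function.Surjective pA)
    (hkerA : LinearMap.ker pA = LinearMap.range MA.mulVecLin)
    (MB : Matrix (Fin nb) (Fin mb) R) (pB : (Fin nb → R) →ₗ[R] B)
    (hpB : Function.Surjective pB)
    (hkerB : LinearMap.ker pB = LinearMap.range MB.mulVecLin)
    (MC : Matrix (Fin nc) (Fin mc) R) (pC : (Fin nc → R) →ₗ[R] C)
    (hpC : Function.Surjective pC)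
    (hkerC : LinearMap.ker pC = LinearMap.range MC.mulVecLin)
    (dC0 : R) (hdC0 : IsGCDOfIdeal dC0 (elemIdeal MC 0)) (hunit : IsUnit dC0)
    (i : ℕ) (dAi dBi : R)
    (hdAi : IsGCDOfIdeal dAi (elemIdeal MA i))
    (hdBi : IsGCDOfIdeal dBi (elemIdeal MB i)) :
    Associated dAi dBi := by
  classical
  have hEC : elemIdeal MC 0 = minors MC nc := by
    show minorsIdeal MC (nc - 0) = minors MC nc
    rw [Nat.sub_zero, minorsIdeal_eq_minors]
  set SC : Set R :=
    { x | ∃ (r : Fin nc → Fin nc) (c : Fin nc → Fin mc), x = (MC.submatrix r c).det }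
    with hSC
  have hspanSC : minors MC nc = Ideal.span SC := rfl
  have hgen_dvd_dC0 : ∀ q : R, (∀ y ∈ SC, q ∣ y) → q ∣ dC0 := by
    intro q hq
    refine hdC0.2 q ?_
    intro x hx
    rw [hEC, hspanSC] at hx
    exact dvd_of_dvd_gens hq x hx
  have hprSC : ∀ q : R, Prime q → ¬ (∀ y ∈ SC, q ∣ y) := by
    intro q hq hall
    exact hq.not_unit (isUnit_of_dvd_unit (hgen_dvd_dC0 q hall) hunit)
  have hnzSC : ∃ y ∈ SC, y ≠ 0 := by
    by_contra hno
    push_neg at hno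
    have h0 : (0:R) ∣ dC0 := hgen_dvd_dC0 0 (fun y hy => by rw [hno y hy])
    rw [zero_dvd_iff] at h0
    exact hunit.ne_zero h0
  obtain ⟨Y, p, hp, hker, hextra⟩ :=
    exists_block_pres f g hf hg hexact MA pA hpA hkerA MC pC hpC hkerC
  set MBlock := Matrix.fromBlocks MA Y 0 MC with hMB
  set s := na + nc - i with hs
  have hInv : minors MB (nb - i) = minors MBlock s := by
    have h := minors_pres_eq MB pB hpB hkerB MBlock p hp hker i
    simpa [Fintype.card_fin, Fintype.card_sum] using h
  have hEB : elemIdeal MB i = minors MBlock s := by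
    show minorsIdeal MB (nb - i) = _
    rw [minorsIdeal_eq_minors]
    exact hInv
  have hEA : elemIdeal MA i = minors MA (na - i) := rfl
  have hdBi_block : ∀ x ∈ minors MBlock s, dBi ∣ x := by
    intro x hx
    exact hdBi.1 x (by rw [hEB]; exact hx)
  by_cases hi : na ≤ i
  · -- both are units
    have hAtop : (1:R) ∈ elemIdeal MA i := by
      rw [hEA]
      have h0 : na - i = 0 := by omega
      rw [h0, minors_zero]
      trivial
    have hdAiu : IsUnit dAi := isUnit_of_dvd_one (hdAi.1 1 hAtop)
    have hsnc : s ≤ nc := by omega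
    have hBCd : ∀ x ∈ minors MC nc, dBi ∣ x := by
      intro x hx
      refine hdBi_block x ?_
      have h1 : x ∈ minors MC s := minors_le_of_le MC hsnc hx
      have hsub : MC = MBlock.submatrix Sum.inr Sum.inr := by
        ext a b; simp [hMB]
      rw [hsub] at h1
      exact minors_submatrix_le MBlock s Sum.inr Sum.inr h1
    have hdBiu : IsUnit dBi :=
      isUnit_of_dvd_unit (hdC0.2 dBi (fun x hx => hBCd x (by rw [← hEC]; exact hx))) hunit
    exact (associated_one_iff_isUnit.mpr hdAiu).trans
      (associated_one_iff_isUnit.mpr hdBiu).symm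
  · push_neg at hi
    have hd1 : dBi ∣ dAi := by
      refine hdAi.2 dBi ?_
      intro x hx
      rw [hEA] at hx
      refine Submodule.span_induction (p := fun x _ => dBi ∣ x) ?_ (dvd_zero _)
        (fun a b _ _ ha hb => dvd_add ha hb)
        (fun r a _ ha => by show dBi ∣ r * a; exact ha.mul_left r) hx
      rintro μ ⟨rμ, cμ, rfl⟩
      refine dvd_of_forall_dvd_mul SC hnzSC hprSC dBi _ ?_
      rintro ν ⟨r₀, c₀, rfl⟩
      have hsize : s = (na - i) + nc := by omega
      set e : Fin s ≃ Fin (na - i) ⊕ Fin nc := (finCongr hsize).trans finSumFinEquiv.symm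
        with he
      set rr : Fin (na-i) ⊕ Fin nc → Fin na ⊕ Fin nc :=
        Sum.elim (Sum.inl ∘ rμ) (Sum.inr ∘ r₀) with hrr
      set cc : Fin (na-i) ⊕ Fin nc → Fin ma ⊕ Fin mc :=
        Sum.elim (Sum.inl ∘ cμ) (Sum.inr ∘ c₀) with hcc
      have hmat : MBlock.submatrix rr cc = Matrix.fromBlocks (MA.submatrix rμ cμ)
          (Y.submatrix rμ c₀) 0 (MC.submatrix r₀ c₀) := by
        ext a b
        rcases a with a | a <;> rcases b with b | b <;> simp [hMB, hrr, hcc]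
      have hdet : (MBlock.submatrix (rr ∘ e) (cc ∘ e)).det
          = (MA.submatrix rμ cμ).det * (MC.submatrix r₀ c₀).det := by
        rw [← Matrix.submatrix_submatrix, Matrix.det_submatrix_equiv_self e, hmat,
          Matrix.det_fromBlocks_zero₂₁]
      have hmem : (MA.submatrix rμ cμ).det * (MC.submatrix r₀ c₀).det
          ∈ minors MBlock s := by
        rw [← hdet]
        exact det_mem_minors _ _ _ _
      exact hdBi_block _ hmem
    have hd2 : dAi ∣ dBi := by
      refine hdBi.2 dAi ?_
      intro x hx
      rw [hEB] at hx
      refine Submodule.span_induction (p := fun x _ => dAi ∣ x) ?_ (dvd_zero _)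
        (fun a b _ _ ha hb => dvd_add ha hb)
        (fun r a _ ha => by show dAi ∣ r * a; exact ha.mul_left r) hx
      rintro μB ⟨rr, cc, rfl⟩
      set N := na * s with hN
      have hNpos : 0 < N := Nat.mul_pos (by omega) (by omega)
      refine dvd_of_forall_dvd_mul ((fun y => y ^ N) '' SC) ?_ ?_ dAi _ ?_
      · obtain ⟨y, hy, hy0⟩ := hnzSC
        exact ⟨y^N, Set.mem_image_of_mem _ hy, pow_ne_zero N hy0⟩
      · rintro q hq hall
        refine hprSC q hq ?_
        intro y hy
        exact hq.dvd_of_dvd_pow (hall (y^N) (Set.mem_image_of_mem _ hy))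
      · rintro _ ⟨ν', ⟨r₀, c₀, rfl⟩, rfl⟩
        show dAi ∣ (MBlock.submatrix rr cc).det * ((MC.submatrix r₀ c₀).det) ^ N
        -- main claim with identity rows first
        have KEY : ∀ c₀ : Fin nc → Fin mc,
            dAi ∣ (MBlock.submatrix rr cc).det * ((MC.submatrix _root_.id c₀).det) ^ N := by
          intro c₀
          set Sq : Matrix (Fin nc) (Fin nc) R := MC.submatrix _root_.id c₀ with hSq
          set ν := Sq.det with hν
          set Sel : Matrix (Fin mc) (Fin nc) R :=
            Matrix.of fun j k => if c₀ k = j then (1:R) else 0 with hSel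
          have hMCSel : MC * Sel = Sq := by
            ext a k
            simp only [Matrix.mul_apply, hSel, Matrix.of_apply, mul_ite, mul_one, mul_zero,
              hSq, Matrix.submatrix_apply, _root_.id]
            rw [Finset.sum_ite_eq Finset.univ (c₀ k) (fun j => MC a j)]
            simp
          set Qν : Matrix (Fin mc) (Fin nc) R := Sel * Sq.adjugate with hQν
          have hMCQ : MC * Qν = ν • (1 : Matrix (Fin nc) (Fin nc) R) := by
            rw [hQν, ← Matrix.mul_assoc, hMCSel, Matrix.mul_adjugate]
          have hDcol : ∀ j : Fin mc, (fun a => (ν • Y - Y * (Qν * MC)) a j)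
              ∈ LinearMap.range MA.mulVecLin := by
            intro j
            apply hextra
            rw [hker]
            have h1 : MBlock.mulVec (Sum.elim 0 (ν • (Pi.single j 1 : Fin mc → R)))
                - MBlock.mulVec (Sum.elim 0 (Qν.mulVec (MC.mulVec (Pi.single j 1))))
                = Sum.elim (fun a => (ν • Y - Y * (Qν * MC)) a j) 0 := by
              rw [hMB, Matrix.fromBlocks_mulVec, Matrix.fromBlocks_mulVec]
              funext a
              rcases a with a | a
              · simp only [Sum.elim_inl, Sum.elim_comp_inl, Sum.elim_comp_inr, Pi.add_apply,
                  Pi.sub_apply, Matrix.mulVec_zero, zero_add, Matrix.sub_apply,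
                  Matrix.smul_apply, smul_eq_mul]
                rw [Matrix.mulVec_smul, Matrix.mulVec_mulVec, Matrix.mulVec_mulVec,
                  Matrix.mulVec_single, Matrix.mulVec_single, Matrix.mul_assoc]
                simp [mul_comm]
              · simp only [Sum.elim_inr, Sum.elim_comp_inl, Sum.elim_comp_inr, Pi.add_apply,
                  Matrix.mulVec_zero, zero_add, Pi.sub_apply]
                rw [Matrix.mulVec_smul, Matrix.mulVec_mulVec, hMCQ,
                  Matrix.smul_mulVec, Matrix.one_mulVec]
                simp
            rw [← h1]
            refine Submodule.sub_mem _
              ⟨Sum.elim 0 (ν • (Pi.single j 1 : Fin mc → R)), ?_⟩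
              ⟨Sum.elim 0 (Qν.mulVec (MC.mulVec (Pi.single j 1))), ?_⟩ <;>
              rw [Matrix.mulVecLin_apply]
          choose zc hzc using hDcol
          set Z : Matrix (Fin ma) (Fin mc) R := Matrix.of fun a j => zc j a with hZ
          have hD : ν • Y - Y * (Qν * MC) = MA * Z := by
            ext a j
            have h2 := congrFun (hzc j) a
            rw [Matrix.mulVecLin_apply] at h2
            rw [← h2]
            simp [Matrix.mul_apply, Matrix.mulVec, dotProduct, hZ]
          set L : Matrix (Fin na ⊕ Fin nc) (Fin na ⊕ Fin nc) R :=
            Matrix.fromBlocks (ν • 1) (-(Y * Qν)) 0 1 with hL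
          have hLM : L * MBlock = Matrix.fromBlocks (ν • MA) (MA * Z) 0 MC := by
            rw [hL, hMB, Matrix.fromBlocks_multiply, ← hD]
            simp only [Matrix.smul_mul, Matrix.one_mul, Matrix.mul_zero, Matrix.zero_mul,
              Matrix.neg_mul, add_zero, zero_add, Matrix.mul_assoc, ← sub_eq_add_neg]
          have hG : Matrix.fromBlocks (ν • MA) (MA * Z) 0 MC
              = (Matrix.fromBlocks MA 0 0 (1 : Matrix (Fin nc) (Fin nc) R))
                * (Matrix.fromBlocks (ν • (1 : Matrix (Fin ma) (Fin ma) R)) Z 0 MC) := by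
            rw [Matrix.fromBlocks_multiply]
            simp only [Matrix.mul_smul, Matrix.mul_one, Matrix.zero_mul, Matrix.mul_zero,
              Matrix.one_mul, smul_zero, add_zero, zero_add]
          have hdetL : L.det = ν ^ na := by
            rw [hL, Matrix.det_fromBlocks_zero₂₁, Matrix.det_one, mul_one, Matrix.det_smul,
              Matrix.det_one, mul_one, Fintype.card_fin]
          have hfinal : (ν ^ na) • MBlock
              = L.adjugate * ((Matrix.fromBlocks MA 0 0 (1 : Matrix (Fin nc) (Fin nc) R))
                * (Matrix.fromBlocks (ν • (1 : Matrix (Fin ma) (Fin ma) R)) Z 0 MC)) := by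
            rw [← hG, ← hLM, ← Matrix.mul_assoc, Matrix.adjugate_mul, hdetL,
              Matrix.smul_mul, Matrix.one_mul]
          have hμ : ν^N * (MBlock.submatrix rr cc).det
              = (((ν^na) • MBlock).submatrix rr cc).det := by
            have hsm : ((ν^na) • MBlock).submatrix rr cc
                = (ν^na) • (MBlock.submatrix rr cc) := by
              ext a b; simp
            rw [hsm, Matrix.det_smul, Fintype.card_fin, ← pow_mul, hN]
          have hmem2 : ν^N * (MBlock.submatrix rr cc).det ∈ minors MA (na - i) := by
            rw [hμ, hfinal]
            have h1 := det_mem_minors (L.adjugate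
              * ((Matrix.fromBlocks MA 0 0 (1 : Matrix (Fin nc) (Fin nc) R))
                * (Matrix.fromBlocks (ν • (1 : Matrix (Fin ma) (Fin ma) R)) Z 0 MC))) s rr cc
            have h2 := minors_mul_le_right L.adjugate _ s h1
            have h3 := minors_mul_le_left
              (Matrix.fromBlocks MA 0 0 (1 : Matrix (Fin nc) (Fin nc) R)) _ s h2
            have h4 : minors (Matrix.fromBlocks MA (0 : Matrix (Fin na) (Fin nc) R) 0
                (1 : Matrix (Fin nc) (Fin nc) R)) s = minors MA (na - i) := by
              rw [minors_one_block]
              congr 1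
              rw [Fintype.card_fin]
              omega
            rw [h4] at h3
            exact h3
          have hdvd := hdAi.1 _ (show ν^N * (MBlock.submatrix rr cc).det ∈ elemIdeal MA i by
            rw [hEA]; exact hmem2)
          rw [mul_comm] at hdvd
          exact hdvd
        by_cases hinj : Function.Injective r₀
        · set σ : Equiv.Perm (Fin nc) :=
            Equiv.ofBijective r₀ ((Finite.injective_iff_bijective).mp hinj) with hσ
          have hperm : MC.submatrix r₀ c₀
              = (MC.submatrix _root_.id c₀).submatrix (⇑σ) _root_.id := by
            ext a b
            simp [hσ, Matrix.submatrix_apply]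
          have hν : (MC.submatrix r₀ c₀).det
              = ((Equiv.Perm.sign σ : ℤ) : R) * (MC.submatrix _root_.id c₀).det := by
            rw [hperm, Matrix.det_permute]
          have hrw : (MBlock.submatrix rr cc).det * ((MC.submatrix r₀ c₀).det) ^ N
              = (((Equiv.Perm.sign σ : ℤ) : R))^N *
                ((MBlock.submatrix rr cc).det * ((MC.submatrix _root_.id c₀).det) ^ N) := by
            rw [hν]; ring
          rw [hrw]
          exact Dvd.dvd.mul_left (KEY c₀) _
        · have hν0 : (MC.submatrix r₀ c₀).det = 0 :=
            minors_det_zero_of_dup MC (Or.inl hinj)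
          rw [hν0, zero_pow (by omega : N ≠ 0), mul_zero]
          exact dvd_zero _
    exact associated_of_dvd_dvd hd2 hd1
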